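/- Let γ > 0 and let (H_k)_{k∈ℤ} be linear subspaces of ℝ^d with linear maps A_k : H_k → H_{k+1} such that the sequence 𝒜 = (A_k) has property (C) with constants N > 1 and λ ∈ (0,1), with projections P_k, Q_k and maps B_k as in the definition. Define, for a sequence z = (z_k)_{k∈ℤ} with z_k ∈ H_k and ‖z‖_γ < ∞, the sequence G(z) by (G(z))_k = Σ_{u=−∞}^{k} A_{k−1}⋯A_u P_u z_u − Σ_{u=k+1}^{∞} B_k⋯B_{u−1} Q_u z_u (where the term u = k in the first sum is P_k z_k). Then both series converge absolutely for every k, G(z) ∈ N_γ(ℤ), and there exists a constant C > 0, depending only on N, λ, γ, such that ‖G(z)‖_γ ≤ C‖z‖_γ; that is, G is a bounded linear operator from N_γ(ℤ) to N_γ(ℤ). -/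

import Mathlib

noncomputable section

open Filter Topology

/-- `ℝ^d`. -/
abbrev Ed (d : ℕ) := EuclideanSpace ℝ (Fin d)

/-- The weight `(|k| + 1) ^ γ`. -/
noncomputable def wt (γ : ℝ) (k : ℤ) : ℝ := (|(k : ℝ)| + 1) ^ γ

/-- `fwdProd A u n = A (u+n-1) ∘ … ∘ A u` (forward composition of `n` factors). -/
noncomputable def fwdProd {d : ℕ} (A : ℤ → (Ed d →L[ℝ] Ed d)) (u : ℤ) :
    ℕ → (Ed d →L[ℝ] Ed d)
  | 0 => 1
  | n + 1 => (A (u + n)).comp (fwdProd A u n)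

/-- `bwdProd B k n = B k ∘ B (k+1) ∘ … ∘ B (k+n-1)` (backward composition of `n` factors). -/
noncomputable def bwdProd {d : ℕ} (B : ℤ → (Ed d →L[ℝ] Ed d)) (k : ℤ) :
    ℕ → (Ed d →L[ℝ] Ed d)
  | 0 => 1
  | n + 1 => (bwdProd B k n).comp (B (k + n))

lemma wt_pos (γ : ℝ) (k : ℤ) : 0 < wt γ k := by
  unfold wt
  positivity

lemma one_le_wt {γ : ℝ} (hγ : 0 ≤ γ) (k : ℤ) : 1 ≤ wt γ k :=
  Real.one_le_rpow (by have := abs_nonneg ((k:ℝ)); linarith) hγ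

lemma wt_mul {γ : ℝ} (hγ : 0 ≤ γ) (k u : ℤ) : wt γ k ≤ wt γ u * wt γ (k - u) := by
  unfold wt
  rw [← Real.mul_rpow (by positivity) (by positivity)]
  apply Real.rpow_le_rpow (by positivity) ?_ hγ
  have h1 : |(k:ℝ)| ≤ |(u:ℝ)| + |((k - u : ℤ):ℝ)| := by
    push_cast
    have := abs_add_le (u:ℝ) ((k:ℝ) - u)
    simpa using this
  nlinarith [abs_nonneg ((u:ℝ)), abs_nonneg (((k - u : ℤ)):ℝ)]

lemma fwd_est {d : ℕ} (S : ℤ → Submodule ℝ (Ed d)) (A : ℤ → (Ed d →L[ℝ] Ed d))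
    {lam : ℝ} (hlam : 0 ≤ lam)
    (hA : ∀ k : ℤ, ∀ v ∈ S k, A k v ∈ S (k + 1) ∧ ‖A k v‖ ≤ lam * ‖v‖)
    (u : ℤ) (v : Ed d) (hv : v ∈ S u) :
    ∀ n : ℕ, fwdProd A u n v ∈ S (u + n) ∧ ‖fwdProd A u n v‖ ≤ lam ^ n * ‖v‖ := by
  intro n
  induction n with
  | zero => simpa [fwdProd] using hv
  | succ n ih =>
    have h1 := hA (u + n) _ ih.1
    have heq : fwdProd A u (n + 1) v = A (u + n) (fwdProd A u n v) := rfl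
    have e : (u + ((n : ℕ) + 1 : ℕ) : ℤ) = (u + n) + 1 := by push_cast; ring
    constructor
    · rw [heq, e]; exact h1.1
    · rw [heq]
      calc ‖A (u + n) (fwdProd A u n v)‖ ≤ lam * ‖fwdProd A u n v‖ := h1.2
        _ ≤ lam * (lam ^ n * ‖v‖) := by gcongr; exact ih.2
        _ = lam ^ (n + 1) * ‖v‖ := by ring

lemma bwd_est {d : ℕ} (U : ℤ → Submodule ℝ (Ed d)) (B : ℤ → (Ed d →L[ℝ] Ed d))
    {lam : ℝ} (hlam : 0 ≤ lam)
    (hB : ∀ k : ℤ, ∀ v ∈ U (k + 1), B k v ∈ U k ∧ ‖B k v‖ ≤ lam * ‖v‖)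
    (k : ℤ) :
    ∀ n : ℕ, ∀ v ∈ U (k + n), bwdProd B k n v ∈ U k ∧ ‖bwdProd B k n v‖ ≤ lam ^ n * ‖v‖ := by
  intro n
  induction n with
  | zero => intro v hv; constructor
            · simpa [bwdProd] using hv
            · simp [bwdProd]
  | succ n ih =>
    intro v hv
    have hv' : v ∈ U ((k + n) + 1) := by
      have e : (k + ((n : ℕ) + 1 : ℕ) : ℤ) = (k + n) + 1 := by push_cast; ring
      rwa [e] at hv
    have h1 := hB (k + n) v hv'
    have heq : bwdProd B k (n + 1) v = bwdProd B k n (B (k + n) v) := rfl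
    have h2 := ih (B (k + n) v) h1.1
    refine ⟨by rw [heq]; exact h2.1, ?_⟩
    rw [heq]
    calc ‖bwdProd B k n (B (k + n) v)‖ ≤ lam ^ n * ‖B (k + n) v‖ := h2.2
      _ ≤ lam ^ n * (lam * ‖v‖) := by gcongr; exact h1.2
      _ = lam ^ (n + 1) * ‖v‖ := by ring

lemma summable_aux {γ lam : ℝ} (hγ : 0 < γ) (h0 : 0 < lam) (h1 : lam < 1) :
    Summable (fun n : ℕ => ((n : ℝ) + 2) ^ γ * lam ^ n) := by
  set m := ⌈γ⌉₊ with hm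
  have hS : Summable (fun n : ℕ => (n : ℝ) ^ m * lam ^ n) :=
    summable_pow_mul_geometric_of_norm_lt_one m (by rw [Real.norm_eq_abs, abs_of_pos h0]; exact h1)
  have hS2 : Summable ((fun n : ℕ => (n : ℝ) ^ m * lam ^ n) ∘ (fun n => n + 1)) :=
    hS.comp_injective (add_left_injective 1)
  have hS3 : Summable (fun n : ℕ => lam⁻¹ * (2 ^ m * (((n : ℝ) + 1) ^ m * lam ^ (n + 1)))) := by
    apply Summable.mul_left
    apply Summable.mul_left
    convert hS2 using 2 with n
    rfl
    simp only [Function.comp_apply]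
    push_cast
    ring
  apply hS3.of_nonneg_of_le (fun n => by positivity)
  intro n
  have e1 : ((n : ℝ) + 2) ^ γ ≤ ((n : ℝ) + 2) ^ (m : ℝ) :=
    Real.rpow_le_rpow_of_exponent_le (by have := Nat.cast_nonneg (α := ℝ) n; linarith) (Nat.le_ceil γ)
  have e2 : ((n : ℝ) + 2) ^ (m : ℝ) = ((n : ℝ) + 2) ^ m := Real.rpow_natCast _ m
  have e3 : ((n : ℝ) + 2) ^ m ≤ 2 ^ m * ((n : ℝ) + 1) ^ m := by
    rw [← mul_pow]
    apply pow_le_pow_left₀ (by positivity)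
    have := Nat.cast_nonneg (α := ℝ) n
    linarith
  calc ((n : ℝ) + 2) ^ γ * lam ^ n ≤ (2 ^ m * ((n : ℝ) + 1) ^ m) * lam ^ n := by
        apply mul_le_mul_of_nonneg_right _ (by positivity)
        rw [e2] at e1; linarith
    _ = lam⁻¹ * (2 ^ m * (((n : ℝ) + 1) ^ m * lam ^ (n + 1))) := by
        field_simp
        ring

/-- the operator `G` is a bounded operator from `N_γ(ℤ)` to `N_γ(ℤ)`,
with a bound depending only on `N`, `λ` and `γ`. -/
theorem G_bounded (γ N lam : ℝ) (hγ : 0 < γ) (hN : 1 < N) (hlam0 : 0 < lam) (hlam1 : lam < 1) :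
    ∃ C : ℝ, 0 < C ∧
      ∀ (d : ℕ) (H S U : ℤ → Submodule ℝ (Ed d)) (A P Q B : ℤ → (Ed d →L[ℝ] Ed d)),
        (∀ k : ℤ, ∀ v ∈ H k, A k v ∈ H (k + 1)) →
        (∀ k : ℤ, S k ≤ H k) → (∀ k : ℤ, U k ≤ H k) →
        (∀ k : ℤ, ∀ v ∈ H k, P k v + Q k v = v ∧ P k v ∈ S k ∧ Q k v ∈ U k ∧
          ‖P k v‖ ≤ N * ‖v‖ ∧ ‖Q k v‖ ≤ N * ‖v‖) →
        (∀ k : ℤ, ∀ v ∈ S k, P k v = v) → (∀ k : ℤ, ∀ v ∈ U k, Q k v = v) →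
        (∀ k : ℤ, ∀ v ∈ S k, A k v ∈ S (k + 1) ∧ ‖A k v‖ ≤ lam * ‖v‖) →
        (∀ k : ℤ, ∀ v ∈ U (k + 1), B k v ∈ U k ∧ ‖B k v‖ ≤ lam * ‖v‖ ∧ A k (B k v) = v) →
        ∀ (z : ℤ → Ed d), (∀ k : ℤ, z k ∈ H k) →
          ∀ Cz : ℝ, (∀ k : ℤ, ‖z k‖ * wt γ k ≤ Cz) →
            (∀ k : ℤ, Summable fun n : ℕ =>
              ‖(fwdProd A (k - n) n) (P (k - n) (z (k - n)))‖) ∧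
            (∀ k : ℤ, Summable fun n : ℕ =>
              ‖(bwdProd B k (n + 1)) (Q (k + 1 + n) (z (k + 1 + n)))‖) ∧
            ∀ k : ℤ,
              ‖(∑' n : ℕ, (fwdProd A (k - n) n) (P (k - n) (z (k - n)))) -
                  ∑' n : ℕ, (bwdProd B k (n + 1)) (Q (k + 1 + n) (z (k + 1 + n)))‖ * wt γ k ≤
                C * Cz := by
  have hSsum := summable_aux hγ hlam0 hlam1
  set Sg : ℝ := ∑' n : ℕ, ((n : ℝ) + 2) ^ γ * lam ^ n with hSg
  have hSgpos : 0 < Sg := by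
    apply Summable.tsum_pos hSsum (fun n => by positivity) 0
    positivity
  refine ⟨2 * N * Sg, by positivity, ?_⟩
  intro d H S U A P Q B hAH hSH hUH hPQ hPid hQid hA hB z hz Cz hzC
  have hCz0 : 0 ≤ Cz := le_trans (mul_nonneg (norm_nonneg _) (wt_pos γ 0).le) (hzC 0)
  have hzb : ∀ u : ℤ, ‖z u‖ ≤ Cz := fun u =>
    le_trans (le_mul_of_one_le_right (norm_nonneg _) (one_le_wt hγ.le u)) (hzC u)
  have hB' : ∀ k : ℤ, ∀ v ∈ U (k + 1), B k v ∈ U k ∧ ‖B k v‖ ≤ lam * ‖v‖ := by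
    intro k v hv
    exact ⟨(hB k v hv).1, (hB k v hv).2.1⟩
  -- termwise bounds
  have ha : ∀ k : ℤ, ∀ n : ℕ,
      ‖(fwdProd A (k - n) n) (P (k - n) (z (k - n)))‖ ≤ lam ^ n * (N * ‖z (k - n)‖) := by
    intro k n
    obtain ⟨_, hmem, _, hnorm, _⟩ := hPQ (k - n) (z (k - n)) (hz (k - n))
    have := (fwd_est S A hlam0.le hA (k - n) _ hmem n).2
    calc ‖(fwdProd A (k - n) n) (P (k - n) (z (k - n)))‖
        ≤ lam ^ n * ‖P (k - n) (z (k - n))‖ := this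
      _ ≤ lam ^ n * (N * ‖z (k - n)‖) := by gcongr
  have hb : ∀ k : ℤ, ∀ n : ℕ,
      ‖(bwdProd B k (n + 1)) (Q (k + 1 + n) (z (k + 1 + n)))‖
        ≤ lam ^ (n + 1) * (N * ‖z (k + 1 + n)‖) := by
    intro k n
    obtain ⟨_, _, hmem, _, hnorm⟩ := hPQ (k + 1 + n) (z (k + 1 + n)) (hz (k + 1 + n))
    have hmem' : Q (k + 1 + n) (z (k + 1 + n)) ∈ U (k + ((n : ℕ) + 1 : ℕ)) := by
      have e : (k + ((n : ℕ) + 1 : ℕ) : ℤ) = k + 1 + n := by push_cast; ring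
      rwa [e]
    have := (bwd_est U B hlam0.le hB' k (n + 1) _ hmem').2
    calc ‖(bwdProd B k (n + 1)) (Q (k + 1 + n) (z (k + 1 + n)))‖
        ≤ lam ^ (n + 1) * ‖Q (k + 1 + n) (z (k + 1 + n))‖ := this
      _ ≤ lam ^ (n + 1) * (N * ‖z (k + 1 + n)‖) := by gcongr
  have hgeo : Summable (fun n : ℕ => (N * Cz) * lam ^ n) :=
    (summable_geometric_of_lt_one hlam0.le hlam1).mul_left _
  have hsum1 : ∀ k : ℤ, Summable fun n : ℕ =>
      ‖(fwdProd A (k - n) n) (P (k - n) (z (k - n)))‖ := by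
    intro k
    apply hgeo.of_nonneg_of_le (fun n => norm_nonneg _)
    intro n
    calc ‖(fwdProd A (k - n) n) (P (k - n) (z (k - n)))‖
        ≤ lam ^ n * (N * ‖z (k - n)‖) := ha k n
      _ ≤ lam ^ n * (N * Cz) := by gcongr; exact hzb _
      _ = (N * Cz) * lam ^ n := by ring
  have hsum2 : ∀ k : ℤ, Summable fun n : ℕ =>
      ‖(bwdProd B k (n + 1)) (Q (k + 1 + n) (z (k + 1 + n)))‖ := by
    intro k
    apply hgeo.of_nonneg_of_le (fun n => norm_nonneg _)
    intro n
    calc ‖(bwdProd B k (n + 1)) (Q (k + 1 + n) (z (k + 1 + n)))‖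
        ≤ lam ^ (n + 1) * (N * ‖z (k + 1 + n)‖) := hb k n
      _ ≤ lam ^ n * (N * Cz) := by
          have h1 : lam ^ (n + 1) ≤ lam ^ n :=
            pow_le_pow_of_le_one hlam0.le hlam1.le (Nat.le_succ n)
          have h2 : N * ‖z (k + 1 + n)‖ ≤ N * Cz := by gcongr; exact hzb _
          exact mul_le_mul h1 h2 (by positivity) (by positivity)
      _ = (N * Cz) * lam ^ n := by ring
  refine ⟨hsum1, hsum2, ?_⟩
  intro k
  -- weighted termwise bounds
  have hwtn : ∀ n : ℕ, wt γ ((n : ℤ)) = ((n : ℝ) + 1) ^ γ := by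
    intro n
    unfold wt
    rw [Int.cast_natCast, abs_of_nonneg (by positivity)]
  have hwtn' : ∀ n : ℕ, wt γ (-((n : ℤ) + 1)) = ((n : ℝ) + 2) ^ γ := by
    intro n
    unfold wt
    push_cast
    rw [abs_neg, abs_of_nonneg (by positivity)]
    ring_nf
  have hA2 : ∀ n : ℕ,
      ‖(fwdProd A (k - n) n) (P (k - n) (z (k - n)))‖ * wt γ k
        ≤ N * Cz * (((n : ℝ) + 2) ^ γ * lam ^ n) := by
    intro n
    have hw : wt γ k ≤ wt γ (k - n) * (((n : ℝ) + 1) ^ γ) := by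
      have := wt_mul hγ.le k (k - n)
      simpa [hwtn n] using this
    calc ‖(fwdProd A (k - n) n) (P (k - n) (z (k - n)))‖ * wt γ k
        ≤ (lam ^ n * (N * ‖z (k - n)‖)) * (wt γ (k - n) * (((n : ℝ) + 1) ^ γ)) := by
          apply mul_le_mul (ha k n) hw (wt_pos γ k).le (by positivity)
      _ = (N * (((n : ℝ) + 1) ^ γ * lam ^ n)) * (‖z (k - n)‖ * wt γ (k - n)) := by ring
      _ ≤ (N * (((n : ℝ) + 1) ^ γ * lam ^ n)) * Cz := by
          apply mul_le_mul_of_nonneg_left (hzC _) (by positivity)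
      _ ≤ (N * (((n : ℝ) + 2) ^ γ * lam ^ n)) * Cz := by
          have hx : ((n : ℝ) + 1) ^ γ ≤ ((n : ℝ) + 2) ^ γ :=
            Real.rpow_le_rpow (by positivity) (by linarith) hγ.le
          apply mul_le_mul_of_nonneg_right _ hCz0
          apply mul_le_mul_of_nonneg_left _ (by linarith : (0:ℝ) ≤ N)
          exact mul_le_mul_of_nonneg_right hx (by positivity)
      _ = N * Cz * (((n : ℝ) + 2) ^ γ * lam ^ n) := by ring
  have hB2 : ∀ n : ℕ,
      ‖(bwdProd B k (n + 1)) (Q (k + 1 + n) (z (k + 1 + n)))‖ * wt γ k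
        ≤ N * Cz * (((n : ℝ) + 2) ^ γ * lam ^ n) := by
    intro n
    have hw : wt γ k ≤ wt γ (k + 1 + n) * (((n : ℝ) + 2) ^ γ) := by
      have h := wt_mul hγ.le k (k + 1 + n)
      have e : k - (k + 1 + n) = -((n : ℤ) + 1) := by ring
      rw [e, hwtn' n] at h
      exact h
    calc ‖(bwdProd B k (n + 1)) (Q (k + 1 + n) (z (k + 1 + n)))‖ * wt γ k
        ≤ (lam ^ (n + 1) * (N * ‖z (k + 1 + n)‖)) * (wt γ (k + 1 + n) * (((n : ℝ) + 2) ^ γ)) := by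
          apply mul_le_mul (hb k n) hw (wt_pos γ k).le (by positivity)
      _ = (N * (((n : ℝ) + 2) ^ γ * lam ^ (n + 1))) * (‖z (k + 1 + n)‖ * wt γ (k + 1 + n)) := by
          ring
      _ ≤ (N * (((n : ℝ) + 2) ^ γ * lam ^ (n + 1))) * Cz := by
          apply mul_le_mul_of_nonneg_left (hzC _) (by positivity)
      _ ≤ (N * (((n : ℝ) + 2) ^ γ * lam ^ n)) * Cz := by
          have h1 : lam ^ (n + 1) ≤ lam ^ n :=
            pow_le_pow_of_le_one hlam0.le hlam1.le (Nat.le_succ n)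
          apply mul_le_mul_of_nonneg_right _ hCz0
          apply mul_le_mul_of_nonneg_left _ (by linarith : (0:ℝ) ≤ N)
          exact mul_le_mul_of_nonneg_left h1 (by positivity)
      _ = N * Cz * (((n : ℝ) + 2) ^ γ * lam ^ n) := by ring
  -- now the main estimate
  have hT1 : ‖∑' n : ℕ, (fwdProd A (k - n) n) (P (k - n) (z (k - n)))‖
      ≤ ∑' n : ℕ, ‖(fwdProd A (k - n) n) (P (k - n) (z (k - n)))‖ :=
    norm_tsum_le_tsum_norm (hsum1 k)
  have hT2 : ‖∑' n : ℕ, (bwdProd B k (n + 1)) (Q (k + 1 + n) (z (k + 1 + n)))‖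
      ≤ ∑' n : ℕ, ‖(bwdProd B k (n + 1)) (Q (k + 1 + n) (z (k + 1 + n)))‖ :=
    norm_tsum_le_tsum_norm (hsum2 k)
  have hRS : Summable (fun n : ℕ => N * Cz * (((n : ℝ) + 2) ^ γ * lam ^ n)) :=
    hSsum.mul_left _
  have key1 : (∑' n : ℕ, ‖(fwdProd A (k - n) n) (P (k - n) (z (k - n)))‖) * wt γ k
      ≤ N * Cz * Sg := by
    rw [← tsum_mul_right]
    calc (∑' n : ℕ, ‖(fwdProd A (k - n) n) (P (k - n) (z (k - n)))‖ * wt γ k)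
        ≤ ∑' n : ℕ, N * Cz * (((n : ℝ) + 2) ^ γ * lam ^ n) :=
          Summable.tsum_le_tsum hA2 ((hsum1 k).mul_right _) hRS
      _ = N * Cz * Sg := by rw [hSg, tsum_mul_left]
  have key2 : (∑' n : ℕ, ‖(bwdProd B k (n + 1)) (Q (k + 1 + n) (z (k + 1 + n)))‖) * wt γ k
      ≤ N * Cz * Sg := by
    rw [← tsum_mul_right]
    calc (∑' n : ℕ, ‖(bwdProd B k (n + 1)) (Q (k + 1 + n) (z (k + 1 + n)))‖ * wt γ k)
        ≤ ∑' n : ℕ, N * Cz * (((n : ℝ) + 2) ^ γ * lam ^ n) :=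
          Summable.tsum_le_tsum hB2 ((hsum2 k).mul_right _) hRS
      _ = N * Cz * Sg := by rw [hSg, tsum_mul_left]
  calc ‖(∑' n : ℕ, (fwdProd A (k - n) n) (P (k - n) (z (k - n)))) -
          ∑' n : ℕ, (bwdProd B k (n + 1)) (Q (k + 1 + n) (z (k + 1 + n)))‖ * wt γ k
      ≤ (‖∑' n : ℕ, (fwdProd A (k - n) n) (P (k - n) (z (k - n)))‖ +
          ‖∑' n : ℕ, (bwdProd B k (n + 1)) (Q (k + 1 + n) (z (k + 1 + n)))‖) * wt γ k := by
        apply mul_le_mul_of_nonneg_right (norm_sub_le _ _) (wt_pos γ k).le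
    _ ≤ ((∑' n : ℕ, ‖(fwdProd A (k - n) n) (P (k - n) (z (k - n)))‖) +
          ∑' n : ℕ, ‖(bwdProd B k (n + 1)) (Q (k + 1 + n) (z (k + 1 + n)))‖) * wt γ k := by
        apply mul_le_mul_of_nonneg_right (add_le_add hT1 hT2) (wt_pos γ k).le
    _ = (∑' n : ℕ, ‖(fwdProd A (k - n) n) (P (k - n) (z (k - n)))‖) * wt γ k +
          (∑' n : ℕ, ‖(bwdProd B k (n + 1)) (Q (k + 1 + n) (z (k + 1 + n)))‖) * wt γ k := by
        ring
    _ ≤ N * Cz * Sg + N * Cz * Sg := add_le_add key1 key2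
    _ = 2 * N * Sg * Cz := by ring
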